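/- For any prime p and any positive integer n, the sum over r ≥ 1 of the maximum over 0 ≤ k ≤ n of (⌊n/p^r⌋ - ⌊k/p^r⌋ - ⌊(n-k)/p^r⌋) equals the maximum over 0 ≤ k ≤ n of the sum over r ≥ 1 of (⌊n/p^r⌋ - ⌊k/p^r⌋ - ⌊(n-k)/p^r⌋). (Both sums are finite since the summands vanish for p^r > n.) -/

import Mathlib

set_option maxHeartbeats 1000000 in
/-- For a prime `p` and a positive integer `n`, the sum over `r ≥ 1` of the maximum over
`0 ≤ k ≤ n` of `⌊n/p^r⌋ - ⌊k/p^r⌋ - ⌊(n-k)/p^r⌋` equals the maximum over `0 ≤ k ≤ n` of the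
corresponding sum over `r ≥ 1` (all terms with `p^r > n`, in particular with `r > n`, vanish,
so the sums are truncated at `r = n`). -/
theorem sum_max_eq_max_sum (p n : ℕ) (hp : p.Prime) (hn : 0 < n) :
    ∑ r ∈ Finset.Icc 1 n, (Finset.range (n + 1)).sup' Finset.nonempty_range_add_one
        (fun k => (↑(n / p ^ r) - ↑(k / p ^ r) - ↑((n - k) / p ^ r) : ℤ))
      = (Finset.range (n + 1)).sup' Finset.nonempty_range_add_one
        (fun k => ∑ r ∈ Finset.Icc 1 n,
          (↑(n / p ^ r) - ↑(k / p ^ r) - ↑((n - k) / p ^ r) : ℤ)) := by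
  have hp1 : 1 < p := hp.one_lt
  set L := Nat.log p n with hLdef
  have hpL : p ^ L ≤ n := Nat.pow_log_le_self p hn.ne'
  have hpL' : n < p ^ (L + 1) := Nat.lt_pow_succ_log_self hp1 n
  set k0 := p ^ L - 1 with hk0def
  have hk0n : k0 ≤ n := le_trans (Nat.sub_le _ _) hpL
  have hk0mem : k0 ∈ Finset.range (n + 1) := Finset.mem_range.mpr (by omega)
  -- key formula: the summand is the carry indicator
  have key : ∀ q, 0 < q → ∀ k, k ≤ n →
      ((n / q : ℕ) : ℤ) - ((k / q : ℕ) : ℤ) - (((n - k) / q : ℕ) : ℤ)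
        = if n % q < k % q then 1 else 0 := by
    intro q hq k hk
    have hsplit : n = k + (n - k) := (Nat.add_sub_cancel' hk).symm
    have hdiv : n / q = k / q + (n - k) / q
        + if q ≤ k % q + (n - k) % q then 1 else 0 := by
      conv_lhs => rw [hsplit]
      exact Nat.add_div hq
    have hmod : n % q = (k % q + (n - k) % q) % q := by
      conv_lhs => rw [hsplit]
      exact Nat.add_mod _ _ _
    have ha : k % q < q := Nat.mod_lt _ hq
    have hb : (n - k) % q < q := Nat.mod_lt _ hq
    by_cases hc : q ≤ k % q + (n - k) % q
    · have hm : (k % q + (n - k) % q) % q = k % q + (n - k) % q - q := by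
        rw [Nat.mod_eq_sub_mod hc, Nat.mod_eq_of_lt (by omega)]
      rw [hm] at hmod
      rw [hdiv, if_pos hc]
      push_cast
      split <;> omega
    · have hm : (k % q + (n - k) % q) % q = k % q + (n - k) % q :=
        Nat.mod_eq_of_lt (by omega)
      rw [hm] at hmod
      rw [hdiv, if_neg hc]
      push_cast
      split <;> omega
  have hk0mod : ∀ r, 1 ≤ r → r ≤ L → k0 % p ^ r = p ^ r - 1 := by
    intro r hr hrL
    have hdvd : p ^ r ∣ p ^ L := pow_dvd_pow p hrL
    obtain ⟨c, hc⟩ := hdvd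
    have hq : 0 < p ^ r := Nat.pow_pos (by omega)
    have hc1 : 1 ≤ c := by
      rcases Nat.eq_zero_or_pos c with h | h
      · subst h
        rw [Nat.mul_zero] at hc
        have : 0 < p ^ L := Nat.pow_pos (by omega)
        omega
      · exact h
    obtain ⟨c', rfl⟩ : ∃ c', c = c' + 1 := ⟨c - 1, by omega⟩
    rw [Nat.mul_add, Nat.mul_one] at hc
    have hk0eq : k0 = p ^ r * c' + (p ^ r - 1) := by omega
    rw [hk0eq, Nat.mul_add_mod, Nat.mod_eq_of_lt (by omega)]
  -- per-r bound : k0 achieves the max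
  have bound : ∀ r ∈ Finset.Icc 1 n, ∀ k ∈ Finset.range (n + 1),
      ((n / p ^ r : ℕ) : ℤ) - ((k / p ^ r : ℕ) : ℤ) - (((n - k) / p ^ r : ℕ) : ℤ)
        ≤ ((n / p ^ r : ℕ) : ℤ) - ((k0 / p ^ r : ℕ) : ℤ) - (((n - k0) / p ^ r : ℕ) : ℤ) := by
    intro r hr k hkmem
    rw [Finset.mem_Icc] at hr
    have hk : k ≤ n := by
      have := Finset.mem_range.mp hkmem; omega
    have hq : 0 < p ^ r := Nat.pow_pos (by omega)
    rw [key _ hq k hk, key _ hq k0 hk0n]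
    by_cases hrL : r ≤ L
    · rw [hk0mod r hr.1 hrL]
      have h1 : k % p ^ r < p ^ r := Nat.mod_lt _ hq
      have h2 : n % p ^ r < p ^ r := Nat.mod_lt _ hq
      split <;> split <;> omega
    · have hnq : n < p ^ r := lt_of_lt_of_le hpL' (Nat.pow_le_pow_right (by omega) (by omega))
      rw [Nat.mod_eq_of_lt (by omega : k < p ^ r), Nat.mod_eq_of_lt hnq,
        Nat.mod_eq_of_lt (by omega : k0 < p ^ r)]
      split <;> split <;> omega
  have hsup : ∀ r ∈ Finset.Icc 1 n,
      (Finset.range (n + 1)).sup' Finset.nonempty_range_add_one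
        (fun k => (↑(n / p ^ r) - ↑(k / p ^ r) - ↑((n - k) / p ^ r) : ℤ))
      = (↑(n / p ^ r) - ↑(k0 / p ^ r) - ↑((n - k0) / p ^ r) : ℤ) := by
    intro r hr
    apply le_antisymm
    · exact Finset.sup'_le _ _ (fun k hk => bound r hr k hk)
    · exact Finset.le_sup'
        (fun k => (↑(n / p ^ r) - ↑(k / p ^ r) - ↑((n - k) / p ^ r) : ℤ)) hk0mem
  apply le_antisymm
  · calc ∑ r ∈ Finset.Icc 1 n, (Finset.range (n + 1)).sup' Finset.nonempty_range_add_one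
          (fun k => (↑(n / p ^ r) - ↑(k / p ^ r) - ↑((n - k) / p ^ r) : ℤ))
        = ∑ r ∈ Finset.Icc 1 n,
          (↑(n / p ^ r) - ↑(k0 / p ^ r) - ↑((n - k0) / p ^ r) : ℤ) :=
          Finset.sum_congr rfl hsup
      _ ≤ _ := Finset.le_sup' (fun k => ∑ r ∈ Finset.Icc 1 n,
          (↑(n / p ^ r) - ↑(k / p ^ r) - ↑((n - k) / p ^ r) : ℤ)) hk0mem
  · refine Finset.sup'_le _ _ (fun k hk => ?_)
    refine le_trans (Finset.sum_le_sum (fun r hr => bound r hr k hk)) ?_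
    exact le_of_eq (Finset.sum_congr rfl hsup).symm
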